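/- arXiv:1908.05089 — 4 statements merged into one kernel-verified Lean document; each statement's English description precedes it below -/
import Mathlib

section
/- Let α_s, α_c, β, μ ∈ ℝ, set ξ₁ := α_s − α_c − β and ξ₂ := α_s + α_c − β with ξ₁ ≠ 0 and ξ₂ ≠ 0, let M be the 2×2 matrix with rows (α_s − β, α_c) and (α_c, α_s − β), and let λ₀ := μβ/(β − α_s − α_c). Suppose u : ℝ → ℝ² is differentiable, u(0) = (λ₀², λ₀²), and u′(t) = 2M·u(t) + λ₀·(α_s² + α_c² + 2βμ, 2(α_sα_c + βμ)) for all t ≥ 0. Then for all t ≥ 0, u(t) = c₁·e^{2ξ₁t}·(−1, 1) + c₂·e^{2ξ₂t}·(1, 1) − (λ₀/2)·M⁻¹·(α_s² + α_c² + 2βμ, 2(α_sα_c + βμ)), where c₁ = −λ₀(α_s − α_c)²/(4ξ₁) and c₂ = λ₀(α_s + α_c)²/(4ξ₂). -/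
open Matrix

open Set in
lemma scalar_ode (ξ k : ℝ) (hξ : ξ ≠ 0) (v : ℝ → ℝ)
    (hv : ∀ s ≥ (0:ℝ), HasDerivAt v (2 * ξ * v s + k) s) :
    ∀ t ≥ (0:ℝ), v t = (v 0 + k / (2 * ξ)) * Real.exp (2 * ξ * t) - k / (2 * ξ) := by
  intro t ht
  set c := k / (2 * ξ) with hc
  have hk : k = 2 * ξ * c := by rw [hc]; field_simp
  set g : ℝ → ℝ := fun s => (v s + c) * Real.exp (-(2 * ξ * s)) with hg
  have hgd : ∀ s ≥ (0:ℝ), HasDerivAt g 0 s := by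
    intro s hs
    have h1 : HasDerivAt (fun s : ℝ => -(2 * ξ * s)) (-(2 * ξ)) s := by
      simpa using (hasDerivAt_id s).const_mul (-(2 * ξ))
    have he := h1.exp
    have := ((hv s hs).add_const c).mul he
    refine this.congr_deriv ?_
    rw [hk]; ring
  have hconst : g t = g 0 := by
    have hcont : ContinuousOn g (Icc 0 t) := fun x hx =>
      (hgd x hx.1).continuousAt.continuousWithinAt
    exact constant_of_has_deriv_right_zero hcont
      (fun x hx => (hgd x hx.1).hasDerivWithinAt) t (by simp [ht])
  have h0 : g 0 = v 0 + c := by simp [hg]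
  have hE : Real.exp (-(2 * ξ * t)) = (Real.exp (2 * ξ * t))⁻¹ := by
    rw [← Real.exp_neg]
  have hEpos := Real.exp_pos (2 * ξ * t)
  have : (v t + c) * Real.exp (-(2 * ξ * t)) = v 0 + c := by
    rw [← h0]; exact hconst
  rw [hE] at this
  field_simp at this
  linarith

/-- Explicit solution of the ODE system satisfied by
`(E[λ₁²(t)], E[λ₁(t)λ₂(t)])` for the symmetric Hawkes model started in its
stationary state (Lemma 2 of the appendix). -/
theorem symmetric_hawkes_second_moment_intensity
    (αs αc β μ : ℝ)
    (ξ₁ ξ₂ : ℝ) (hξ₁ : ξ₁ = αs - αc - β) (hξ₂ : ξ₂ = αs + αc - β)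
    (hξ₁0 : ξ₁ ≠ 0) (hξ₂0 : ξ₂ ≠ 0)
    (M : Matrix (Fin 2) (Fin 2) ℝ) (hM : M = !![αs - β, αc; αc, αs - β])
    (lam₀ : ℝ) (hlam₀ : lam₀ = μ * β / (β - αs - αc))
    (c₁ c₂ : ℝ)
    (hc₁ : c₁ = -(lam₀ * (αs - αc) ^ 2) / (4 * ξ₁))
    (hc₂ : c₂ = lam₀ * (αs + αc) ^ 2 / (4 * ξ₂))
    (u : ℝ → Fin 2 → ℝ)
    (hu0 : u 0 = ![lam₀ ^ 2, lam₀ ^ 2])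
    (hu : ∀ t ≥ (0 : ℝ), HasDerivAt u
      ((2 : ℝ) • M.mulVec (u t)
        + lam₀ • ![αs ^ 2 + αc ^ 2 + 2 * β * μ, 2 * (αs * αc + β * μ)]) t) :
    ∀ t ≥ (0 : ℝ),
      u t = (c₁ * Real.exp (2 * ξ₁ * t)) • ![(-1 : ℝ), 1]
          + (c₂ * Real.exp (2 * ξ₂ * t)) • ![(1 : ℝ), 1]
          - (lam₀ / 2) • M⁻¹.mulVec
              ![αs ^ 2 + αc ^ 2 + 2 * β * μ, 2 * (αs * αc + β * μ)] := by
  have hl : lam₀ * ξ₂ = -(μ * β) := by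
    have hne : β - αs - αc ≠ 0 := by
      intro h; apply hξ₂0; rw [hξ₂]; linarith
    rw [hlam₀]
    field_simp
    linear_combination (μ * β) * hξ₂
  set A : ℝ := αs ^ 2 + αc ^ 2 + 2 * β * μ with hA
  set B : ℝ := 2 * (αs * αc + β * μ) with hB
  -- component derivatives
  have hcomp : ∀ i : Fin 2, ∀ s ≥ (0:ℝ), HasDerivAt (fun s => u s i)
      (2 * (M.mulVec (u s)) i + (![lam₀ * A, lam₀ * B] : Fin 2 → ℝ) i) s := by
    intro i s hs
    have := hasDerivAt_pi.mp (hu s hs) i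
    fin_cases i <;>
    simpa [Pi.add_apply, Pi.smul_apply, smul_eq_mul] using this
  have hmv : ∀ x : Fin 2 → ℝ, (M.mulVec x) 0 = (αs - β) * x 0 + αc * x 1 ∧
      (M.mulVec x) 1 = αc * x 0 + (αs - β) * x 1 := by
    intro x
    constructor <;>
      simp [hM, Matrix.mulVec, dotProduct, Fin.sum_univ_two]
  -- eigen-coordinates
  set v₁ : ℝ → ℝ := fun s => u s 1 - u s 0 with hv₁def
  set v₂ : ℝ → ℝ := fun s => u s 0 + u s 1 with hv₂def
  have hv₁d : ∀ s ≥ (0:ℝ), HasDerivAt v₁ (2 * ξ₁ * v₁ s + lam₀ * (B - A)) s := by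
    intro s hs
    have h := (hcomp 1 s hs).sub (hcomp 0 s hs)
    refine h.congr_deriv ?_
    obtain ⟨h0, h1⟩ := hmv (u s)
    rw [h0, h1, hξ₁]
    simp [hv₁def]
    ring
  have hv₂d : ∀ s ≥ (0:ℝ), HasDerivAt v₂ (2 * ξ₂ * v₂ s + lam₀ * (A + B)) s := by
    intro s hs
    have h := (hcomp 0 s hs).add (hcomp 1 s hs)
    refine h.congr_deriv ?_
    obtain ⟨h0, h1⟩ := hmv (u s)
    rw [h0, h1, hξ₂]
    simp [hv₂def]
    ring
  have hv₁0 : v₁ 0 = 0 := by simp [hv₁def, hu0]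
  have hv₂0 : v₂ 0 = 2 * lam₀ ^ 2 := by simp [hv₂def, hu0]; ring
  have hv₁ := scalar_ode ξ₁ (lam₀ * (B - A)) hξ₁0 v₁ hv₁d
  have hv₂ := scalar_ode ξ₂ (lam₀ * (A + B)) hξ₂0 v₂ hv₂d
  -- inverse matrix
  have hdet : M.det = ξ₁ * ξ₂ := by
    rw [hM, Matrix.det_fin_two_of, hξ₁, hξ₂]; ring
  have hMinv : M⁻¹ = (ξ₁ * ξ₂)⁻¹ • !![αs - β, -αc; -αc, αs - β] := by
    rw [Matrix.inv_def, hdet, Ring.inverse_eq_inv', hM, Matrix.adjugate_fin_two]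
    congr 1
  have hMinvV : M⁻¹.mulVec ![A, B] =
      ![(ξ₁ * ξ₂)⁻¹ * ((αs - β) * A - αc * B),
        (ξ₁ * ξ₂)⁻¹ * (-αc * A + (αs - β) * B)] := by
    rw [hMinv]
    funext i
    fin_cases i <;>
      simp [Matrix.mulVec, dotProduct, Fin.sum_univ_two] <;> ring
  intro t ht
  have e₁ := hv₁ t ht
  have e₂ := hv₂ t ht
  rw [hv₁0] at e₁
  rw [hv₂0] at e₂
  have h1 : αs - αc - β ≠ 0 := hξ₁ ▸ hξ₁0
  have h2 : αs + αc - β ≠ 0 := hξ₂ ▸ hξ₂0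
  have hl' : lam₀ * (αs + αc - β) = -(μ * β) := hξ₂ ▸ hl
  have hκ₁ : lam₀ * (B - A) / (2 * ξ₁) = 2 * c₁ := by
    rw [hc₁, hB, hA, hξ₁]
    field_simp
    ring
  have hκ₂ : lam₀ * (A + B) / (2 * ξ₂) = 2 * c₂ - 2 * lam₀ ^ 2 := by
    rw [hc₂, hB, hA, hξ₂]
    field_simp
    linear_combination (16 * lam₀) * hl'
  have f₁ : v₁ t = 2 * c₁ * Real.exp (2 * ξ₁ * t) - 2 * c₁ := by
    rw [e₁, hκ₁]; ring
  have f₂ : v₂ t = 2 * c₂ * Real.exp (2 * ξ₂ * t) - (2 * c₂ - 2 * lam₀ ^ 2) := by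
    rw [e₂, hκ₂]; ring
  have hw₀ : lam₀ / 2 * ((ξ₁ * ξ₂)⁻¹ * ((αs - β) * A - αc * B))
      = -(c₁ - c₂ + lam₀ ^ 2) := by
    have hsplit : lam₀ / 2 * ((ξ₁ * ξ₂)⁻¹ * ((αs - β) * A - αc * B))
        = (lam₀ * (A + B) / (2 * ξ₂)) / 2 - (lam₀ * (B - A) / (2 * ξ₁)) / 2 := by
      rw [hξ₁, hξ₂]
      field_simp
      ring
    rw [hsplit, hκ₁, hκ₂]; ring
  have hw₁ : lam₀ / 2 * ((ξ₁ * ξ₂)⁻¹ * (-αc * A + (αs - β) * B))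
      = -(-c₁ - c₂ + lam₀ ^ 2) := by
    have hsplit : lam₀ / 2 * ((ξ₁ * ξ₂)⁻¹ * (-αc * A + (αs - β) * B))
        = (lam₀ * (A + B) / (2 * ξ₂)) / 2 + (lam₀ * (B - A) / (2 * ξ₁)) / 2 := by
      rw [hξ₁, hξ₂]
      field_simp
      ring
    rw [hsplit, hκ₁, hκ₂]; ring
  have hu0t : u t 0 = (v₂ t - v₁ t) / 2 := by simp [hv₁def, hv₂def]; ring
  have hu1t : u t 1 = (v₂ t + v₁ t) / 2 := by simp [hv₁def, hv₂def]; ring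
  funext i
  fin_cases i <;>
    simp only [Pi.add_apply, Pi.sub_apply, Pi.smul_apply, smul_eq_mul, hMinvV,
      Fin.mk_zero, Fin.mk_one, Fin.isValue,
      Matrix.cons_val_zero, Matrix.cons_val_one, Matrix.head_cons]
  · rw [hu0t, f₁, f₂, hw₀]; ring
  · rw [hu1t, f₁, f₂, hw₁]; ring
end

section
/- Let α_s, α_c, β, μ ∈ ℝ, set ξ₁ := α_s − α_c − β and ξ₂ := α_s + α_c − β with ξ₁ ≠ 0 and ξ₂ ≠ 0, let M be the 2×2 matrix with rows (α_s − β, α_c) and (α_c, α_s − β), let λ₀ := μβ/(β − α_s − α_c), and let u : ℝ → ℝ² be the function u(t) = c₁·e^{2ξ₁t}·(−1, 1) + c₂·e^{2ξ₂t}·(1, 1) − (λ₀/2)·M⁻¹·(α_s² + α_c² + 2βμ, 2(α_sα_c + βμ)) with c₁ = −λ₀(α_s − α_c)²/(4ξ₁) and c₂ = λ₀(α_s + α_c)²/(4ξ₂). Suppose v : ℝ → ℝ² is differentiable, v(0) = (0, 0), and v′(t) = M·v(t) + (α_sλ₀ + u₁(t) + βμλ₀t, α_cλ₀ + u₂(t)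 + βμλ₀t) for all t ≥ 0. Then for all t ≥ 0, v(t) = d₁·e^{ξ₁t}·(−1, 1) + d₂·e^{ξ₂t}·(1, 1) + (c₁/ξ₁)·e^{2ξ₁t}·(−1, 1) + (c₂/ξ₂)·e^{2ξ₂t}·(1, 1) − λ₀·(βμ·M⁻¹·(1, 1)·t + M⁻¹·(α_s, α_c) − (1/2)·(M⁻¹)²·(α_s² + α_c², 2α_sα_c)), where d₁ = λ₀(α_s − α_c)β/(2ξ₁²) and d₂ = −λ₀(α_s + α_c)β/(2ξ₂²). -/
open Matrix

set_option maxHeartbeats 1600000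

private theorem aux_exp_deriv (r t : ℝ) :
    HasDerivAt (fun s : ℝ => Real.exp (r * s)) (r * Real.exp (r * t)) t := by
  have h : HasDerivAt (fun s : ℝ => r * s) (r * 1) t := (hasDerivAt_id t).const_mul r
  have h2 := h.exp
  rw [mul_one] at h2
  rwa [mul_comm] at h2

private theorem aux_deriv (A B C D E F p q t : ℝ) :
    HasDerivAt (fun s : ℝ => A * Real.exp (p * s) + B * Real.exp (q * s)
        + C * Real.exp (2 * p * s) + D * Real.exp (2 * q * s) + E * s + F)
      (A * p * Real.exp (p * t) + B * q * Real.exp (q * t)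
        + C * (2 * p) * Real.exp (2 * p * t) + D * (2 * q) * Real.exp (2 * q * t) + E) t := by
  have hid : HasDerivAt (fun s : ℝ => E * s) (E * 1) t := (hasDerivAt_id t).const_mul E
  have h := (((((aux_exp_deriv p t).const_mul A).add ((aux_exp_deriv q t).const_mul B)).add
      ((aux_exp_deriv (2 * p) t).const_mul C)).add
      ((aux_exp_deriv (2 * q) t).const_mul D)).add hid |>.add_const F
  exact h.congr_deriv (by ring)

/-- Explicit solution of the ODE system satisfied by
`(E[λ₁(t)N₁(t)], E[λ₁(t)N₂(t)])` for the symmetric Hawkes model started in its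
stationary state (Lemma 3 of the appendix). -/
theorem symmetric_hawkes_intensity_count_cross_moment
    (αs αc β μ : ℝ)
    (ξ₁ ξ₂ : ℝ) (hξ₁ : ξ₁ = αs - αc - β) (hξ₂ : ξ₂ = αs + αc - β)
    (hξ₁0 : ξ₁ ≠ 0) (hξ₂0 : ξ₂ ≠ 0)
    (M : Matrix (Fin 2) (Fin 2) ℝ) (hM : M = !![αs - β, αc; αc, αs - β])
    (lam₀ : ℝ) (hlam₀ : lam₀ = μ * β / (β - αs - αc))
    (c₁ c₂ d₁ d₂ : ℝ)
    (hc₁ : c₁ = -(lam₀ * (αs - αc) ^ 2) / (4 * ξ₁))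
    (hc₂ : c₂ = lam₀ * (αs + αc) ^ 2 / (4 * ξ₂))
    (hd₁ : d₁ = lam₀ * (αs - αc) * β / (2 * ξ₁ ^ 2))
    (hd₂ : d₂ = -(lam₀ * (αs + αc) * β) / (2 * ξ₂ ^ 2))
    (u : ℝ → Fin 2 → ℝ)
    (hu : ∀ t, u t = (c₁ * Real.exp (2 * ξ₁ * t)) • ![(-1 : ℝ), 1]
          + (c₂ * Real.exp (2 * ξ₂ * t)) • ![(1 : ℝ), 1]
          - (lam₀ / 2) • M⁻¹.mulVec
              ![αs ^ 2 + αc ^ 2 + 2 * β * μ, 2 * (αs * αc + β * μ)])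
    (v : ℝ → Fin 2 → ℝ)
    (hv0 : v 0 = 0)
    (hv : ∀ t ≥ (0 : ℝ), HasDerivAt v
      (M.mulVec (v t)
        + ![αs * lam₀ + u t 0 + β * μ * lam₀ * t,
            αc * lam₀ + u t 1 + β * μ * lam₀ * t]) t) :
    ∀ t ≥ (0 : ℝ),
      v t = (d₁ * Real.exp (ξ₁ * t)) • ![(-1 : ℝ), 1]
          + (d₂ * Real.exp (ξ₂ * t)) • ![(1 : ℝ), 1]
          + (c₁ / ξ₁ * Real.exp (2 * ξ₁ * t)) • ![(-1 : ℝ), 1]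
          + (c₂ / ξ₂ * Real.exp (2 * ξ₂ * t)) • ![(1 : ℝ), 1]
          - lam₀ • ((β * μ * t) • M⁻¹.mulVec ![(1 : ℝ), 1]
              + M⁻¹.mulVec ![αs, αc]
              - (1 / 2 : ℝ) • (M⁻¹ * M⁻¹).mulVec
                  ![αs ^ 2 + αc ^ 2, 2 * (αs * αc)]) := by
  have h1 : αs - αc - β ≠ 0 := hξ₁ ▸ hξ₁0
  have h2 : αs + αc - β ≠ 0 := hξ₂ ▸ hξ₂0
  -- explicit inverse
  have hMinv : M⁻¹ = (ξ₁ * ξ₂)⁻¹ • !![αs - β, -αc; -αc, αs - β] := by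
    apply Matrix.inv_eq_right_inv
    rw [hM]
    ext i j
    fin_cases i <;> fin_cases j <;>
      · simp only [Matrix.mul_apply, Fin.sum_univ_two, Matrix.smul_apply, smul_eq_mul,
          Matrix.cons_val', Matrix.cons_val_zero, Matrix.cons_val_one, Matrix.head_cons,
          Matrix.empty_val', Matrix.cons_val_fin_one, Matrix.head_fin_const,
          Matrix.one_apply, Fin.isValue]
        rw [hξ₁, hξ₂]
        norm_num
        field_simp
        ring
  have hMv : ∀ x y : ℝ, M⁻¹.mulVec ![x, y]
      = ![((αs - β) * x - αc * y) / (ξ₁ * ξ₂), ((αs - β) * y - αc * x) / (ξ₁ * ξ₂)] := by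
    intro x y
    rw [hMinv]
    funext i
    fin_cases i
    all_goals simp [Matrix.mulVec, dotProduct, Fin.sum_univ_two]
    all_goals ring
  have hMmul : ∀ x : Fin 2 → ℝ,
      M.mulVec x = ![(αs - β) * x 0 + αc * x 1, αc * x 0 + (αs - β) * x 1] := by
    intro x
    rw [hM]
    funext i
    fin_cases i <;>
      simp [Matrix.mulVec, dotProduct, Fin.sum_univ_two]
  have hK0 := hMv 1 1
  have hK1 := hMv αs αc
  have hKu := hMv (αs ^ 2 + αc ^ 2 + 2 * β * μ) (2 * (αs * αc + β * μ))
  have hzin := hMv (αs ^ 2 + αc ^ 2) (2 * (αs * αc))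
  have hK2 : (M⁻¹ * M⁻¹).mulVec ![αs ^ 2 + αc ^ 2, 2 * (αs * αc)]
      = ![((αs - β) * (((αs - β) * (αs ^ 2 + αc ^ 2) - αc * (2 * (αs * αc))) / (ξ₁ * ξ₂))
            - αc * (((αs - β) * (2 * (αs * αc)) - αc * (αs ^ 2 + αc ^ 2)) / (ξ₁ * ξ₂)))
            / (ξ₁ * ξ₂),
          ((αs - β) * (((αs - β) * (2 * (αs * αc)) - αc * (αs ^ 2 + αc ^ 2)) / (ξ₁ * ξ₂))
            - αc * (((αs - β) * (αs ^ 2 + αc ^ 2) - αc * (2 * (αs * αc))) / (ξ₁ * ξ₂)))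
            / (ξ₁ * ξ₂)] := by
    rw [← Matrix.mulVec_mulVec, hzin, hMv]
  -- the candidate solution
  set sol : ℝ → Fin 2 → ℝ := fun s =>
      (d₁ * Real.exp (ξ₁ * s)) • ![(-1 : ℝ), 1]
    + (d₂ * Real.exp (ξ₂ * s)) • ![(1 : ℝ), 1]
    + (c₁ / ξ₁ * Real.exp (2 * ξ₁ * s)) • ![(-1 : ℝ), 1]
    + (c₂ / ξ₂ * Real.exp (2 * ξ₂ * s)) • ![(1 : ℝ), 1]
    - lam₀ • ((β * μ * s) • M⁻¹.mulVec ![(1 : ℝ), 1]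
        + M⁻¹.mulVec ![αs, αc]
        - (1 / 2 : ℝ) • (M⁻¹ * M⁻¹).mulVec ![αs ^ 2 + αc ^ 2, 2 * (αs * αc)]) with hsol
  -- scalar representation of each component
  have hrep : ∀ (i : Fin 2) (s : ℝ), sol s i =
      (d₁ * ![(-1 : ℝ), 1] i) * Real.exp (ξ₁ * s)
      + (d₂ * ![(1 : ℝ), 1] i) * Real.exp (ξ₂ * s)
      + (c₁ / ξ₁ * ![(-1 : ℝ), 1] i) * Real.exp (2 * ξ₁ * s)
      + (c₂ / ξ₂ * ![(1 : ℝ), 1] i) * Real.exp (2 * ξ₂ * s)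
      + (-(lam₀ * (β * μ * M⁻¹.mulVec ![(1 : ℝ), 1] i))) * s
      + (-(lam₀ * (M⁻¹.mulVec ![αs, αc] i
          - (M⁻¹ * M⁻¹).mulVec ![αs ^ 2 + αc ^ 2, 2 * (αs * αc)] i / 2))) := by
    intro i s
    simp only [hsol, Pi.add_apply, Pi.sub_apply, Pi.smul_apply, smul_eq_mul]
    ring
  -- derivative of the candidate
  have hD : ∀ s : ℝ, HasDerivAt sol (fun i =>
      (d₁ * ![(-1 : ℝ), 1] i) * ξ₁ * Real.exp (ξ₁ * s)
      + (d₂ * ![(1 : ℝ), 1] i) * ξ₂ * Real.exp (ξ₂ * s)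
      + (c₁ / ξ₁ * ![(-1 : ℝ), 1] i) * (2 * ξ₁) * Real.exp (2 * ξ₁ * s)
      + (c₂ / ξ₂ * ![(1 : ℝ), 1] i) * (2 * ξ₂) * Real.exp (2 * ξ₂ * s)
      + (-(lam₀ * (β * μ * M⁻¹.mulVec ![(1 : ℝ), 1] i)))) s := by
    intro s
    rw [hasDerivAt_pi]
    intro i
    have hfe : (fun r => sol r i) = fun r =>
        (d₁ * ![(-1 : ℝ), 1] i) * Real.exp (ξ₁ * r)
        + (d₂ * ![(1 : ℝ), 1] i) * Real.exp (ξ₂ * r)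
        + (c₁ / ξ₁ * ![(-1 : ℝ), 1] i) * Real.exp (2 * ξ₁ * r)
        + (c₂ / ξ₂ * ![(1 : ℝ), 1] i) * Real.exp (2 * ξ₂ * r)
        + (-(lam₀ * (β * μ * M⁻¹.mulVec ![(1 : ℝ), 1] i))) * r
        + (-(lam₀ * (M⁻¹.mulVec ![αs, αc] i
            - (M⁻¹ * M⁻¹).mulVec ![αs ^ 2 + αc ^ 2, 2 * (αs * αc)] i / 2))) :=
      funext fun r => hrep i r
    rw [hfe]
    exact aux_deriv _ _ _ _ _ _ ξ₁ ξ₂ s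
  -- the candidate solves the same ODE
  have hODE : ∀ s : ℝ, HasDerivAt sol
      (M.mulVec (sol s)
        + ![αs * lam₀ + u s 0 + β * μ * lam₀ * s,
            αc * lam₀ + u s 1 + β * μ * lam₀ * s]) s := by
    intro s
    convert hD s using 1
    funext i
    fin_cases i <;>
    · simp only [Pi.add_apply, hMmul, hu, hrep, hK0, hK1, hK2, hKu,
        Matrix.cons_val_zero, Matrix.cons_val_one, Matrix.head_cons,
        Pi.sub_apply, Pi.smul_apply, smul_eq_mul, Fin.isValue, Fin.zero_eta, Fin.mk_one]
      rw [hξ₁, hξ₂]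
      field_simp
      ring
  -- initial value
  have hsol0 : sol 0 = 0 := by
    funext i
    fin_cases i <;>
    · simp only [hrep, hK0, hK1, hK2, mul_zero, Real.exp_zero, mul_one,
        Matrix.cons_val_zero, Matrix.cons_val_one, Matrix.head_cons, Pi.zero_apply,
        Fin.isValue, Fin.zero_eta, Fin.mk_one]
      rw [hc₁, hc₂, hd₁, hd₂, hξ₁, hξ₂]
      field_simp
      ring
  -- Lipschitz vector field
  set L : (Fin 2 → ℝ) →L[ℝ] (Fin 2 → ℝ) := LinearMap.toContinuousLinearMap M.mulVecLin with hL
  have hlip : ∀ s : ℝ, LipschitzWith ‖L‖₊ (fun x : Fin 2 → ℝ =>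
      M.mulVec x + ![αs * lam₀ + u s 0 + β * μ * lam₀ * s,
            αc * lam₀ + u s 1 + β * μ * lam₀ * s]) := by
    intro s
    apply LipschitzWith.of_dist_le_mul
    intro x y
    have hxy : dist (M.mulVec x + ![αs * lam₀ + u s 0 + β * μ * lam₀ * s,
            αc * lam₀ + u s 1 + β * μ * lam₀ * s])
        (M.mulVec y + ![αs * lam₀ + u s 0 + β * μ * lam₀ * s,
            αc * lam₀ + u s 1 + β * μ * lam₀ * s]) = dist (L x) (L y) := by
      rw [dist_add_right]
      congr 1 <;> simp [hL]
    rw [hxy]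
    exact L.lipschitz.dist_le_mul x y
  intro t ht
  -- uniqueness on [0, t]
  have key : Set.EqOn v sol (Set.Icc 0 t) := by
    apply ODE_solution_unique hlip
    · exact fun s hs => ((hv s hs.1).continuousAt).continuousWithinAt
    · exact fun s hs => (hv s hs.1).hasDerivWithinAt
    · exact fun s _ => ((hODE s).continuousAt).continuousWithinAt
    · exact fun s _ => (hODE s).hasDerivWithinAt
    · rw [hv0, hsol0]
  exact key ⟨ht, le_rfl⟩
end

section
/- Let κ₁ ≠ 0 and φ, θ ∈ ℝ. Suppose y, x : ℝ → ℝ are differentiable with y(0) = 0, x(0) = 0, y′(t) = −κ₁·y(t) + φθ·t and x′(t) = −2κ₁·x(t) + 2φ·y(t) for all t ≥ 0. Then for all t ≥ 0: y(t) = φθ·(κ₁t − 1 + e^{−κ₁t})/κ₁², x(t) = φ²θ·(−e^{−2κ₁t} + 4e^{−κ₁t} − 3 + 2κ₁t)/(2κ₁³), and consequently x(t) + 2y(t) + θt = φ²θ·(−e^{−2κ₁t} + 4e^{−κ₁t} − 3 + 2κ₁t)/(2κ₁³) + 2φθ·(κ₁t − 1 + e^{−κ₁t})/κ₁² + θt.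 -/
open Set

/-- A function on `[0,∞)` satisfying `f' = c f`, `f 0 = 0`, vanishes. -/
lemma vanish_of_deriv (c : ℝ) (f : ℝ → ℝ) (hf0 : f 0 = 0)
    (hf : ∀ s ≥ (0 : ℝ), HasDerivAt f (c * f s) s) :
    ∀ t ≥ (0 : ℝ), f t = 0 := by
  intro t ht
  set g : ℝ → ℝ := fun s => f s * Real.exp (-c * s) with hg
  have hgderiv : ∀ s ≥ (0 : ℝ), HasDerivAt g 0 s := by
    intro s hs
    have he : HasDerivAt (fun u : ℝ => Real.exp (-c * u)) (-c * Real.exp (-c * s)) s := by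
      simpa [mul_comm] using ((hasDerivAt_id s).const_mul (-c)).exp
    have h1 := (hf s hs).mul he
    convert h1 using 1
    · rfl
    · rfl
    · rfl
    ring
  have hcont : ContinuousOn g (Icc 0 t) := fun s hs =>
    ((hgderiv s hs.1).continuousAt).continuousWithinAt
  have hconst := constant_of_has_deriv_right_zero hcont
    (fun s hs => ((hgderiv s hs.1).hasDerivWithinAt)) t ⟨ht, le_rfl⟩
  have hgt : f t * Real.exp (-c * t) = 0 := by simpa [hg, hf0] using hconst
  exact (mul_eq_zero.mp hgt).resolve_right (Real.exp_ne_zero _)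

/-- The variance formula of the diffusion analogy of the symmetric Hawkes model
(Proposition 2): solutions of the ODEs `y' = -κ₁ y + φθt`, `x' = -2κ₁ x + 2φ y`
with zero initial conditions have the stated closed forms, hence
`Var(R_t)·S₀² = x(t) + 2y(t) + θt` has the stated closed form. -/
theorem diffusion_variance_formula
    (κ₁ φ θ : ℝ) (hκ₁ : κ₁ ≠ 0)
    (y x : ℝ → ℝ) (hy0 : y 0 = 0) (hx0 : x 0 = 0)
    (hy : ∀ t ≥ (0 : ℝ), HasDerivAt y (-κ₁ * y t + φ * θ * t) t)
    (hx : ∀ t ≥ (0 : ℝ), HasDerivAt x (-2 * κ₁ * x t + 2 * φ * y t) t) :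
    ∀ t ≥ (0 : ℝ),
      y t = φ * θ * (κ₁ * t - 1 + Real.exp (-κ₁ * t)) / κ₁ ^ 2 ∧
      x t = φ ^ 2 * θ *
          (-Real.exp (-2 * κ₁ * t) + 4 * Real.exp (-κ₁ * t) - 3 + 2 * κ₁ * t)
          / (2 * κ₁ ^ 3) ∧
      x t + 2 * y t + θ * t
        = φ ^ 2 * θ *
            (-Real.exp (-2 * κ₁ * t) + 4 * Real.exp (-κ₁ * t) - 3 + 2 * κ₁ * t)
            / (2 * κ₁ ^ 3)
          + 2 * φ * θ * (κ₁ * t - 1 + Real.exp (-κ₁ * t)) / κ₁ ^ 2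
          + θ * t := by
  set Y : ℝ → ℝ := fun s => φ * θ * (κ₁ * s - 1 + Real.exp (-κ₁ * s)) / κ₁ ^ 2 with hY
  set X : ℝ → ℝ := fun s => φ ^ 2 * θ *
      (-Real.exp (-2 * κ₁ * s) + 4 * Real.exp (-κ₁ * s) - 3 + 2 * κ₁ * s) / (2 * κ₁ ^ 3) with hX
  have hYd : ∀ s : ℝ, HasDerivAt Y (-κ₁ * Y s + φ * θ * s) s := by
    intro s
    have he : HasDerivAt (fun u : ℝ => Real.exp (-κ₁ * u)) (-κ₁ * Real.exp (-κ₁ * s)) s := by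
      simpa [mul_comm] using ((hasDerivAt_id s).const_mul (-κ₁)).exp
    have h1 : HasDerivAt (fun u : ℝ => κ₁ * u - 1 + Real.exp (-κ₁ * u))
        (κ₁ + -κ₁ * Real.exp (-κ₁ * s)) s := by
      convert (((hasDerivAt_id s).const_mul κ₁).sub_const 1).add he using 1
      · rfl
      · rfl
      · ext u
        simp
      · simp
    have h2 := (h1.const_mul (φ * θ)).div_const (κ₁ ^ 2)
    convert h2 using 1
    · rfl
    · rfl
    simp only [hY]
    field_simp
    ring
  have hXd : ∀ s : ℝ, HasDerivAt X (-2 * κ₁ * X s + 2 * φ * Y s) s := by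
    intro s
    have he : HasDerivAt (fun u : ℝ => Real.exp (-κ₁ * u)) (-κ₁ * Real.exp (-κ₁ * s)) s := by
      simpa [mul_comm] using ((hasDerivAt_id s).const_mul (-κ₁)).exp
    have he2 : HasDerivAt (fun u : ℝ => Real.exp (-2 * κ₁ * u))
        (-2 * κ₁ * Real.exp (-2 * κ₁ * s)) s := by
      simpa [mul_comm] using ((hasDerivAt_id s).const_mul (-2 * κ₁)).exp
    have h1 : HasDerivAt (fun u : ℝ =>
        -Real.exp (-2 * κ₁ * u) + 4 * Real.exp (-κ₁ * u) - 3 + 2 * κ₁ * u)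
        (-(-2 * κ₁ * Real.exp (-2 * κ₁ * s)) + 4 * (-κ₁ * Real.exp (-κ₁ * s)) + 2 * κ₁) s := by
      convert ((he2.neg.add (he.const_mul 4)).sub_const 3).add
        ((hasDerivAt_id s).const_mul (2 * κ₁)) using 1
      · rfl
      · rfl
      · ext u
        simp
      · simp
    have h2 := (h1.const_mul (φ ^ 2 * θ)).div_const (2 * κ₁ ^ 3)
    convert h2 using 1
    · rfl
    · rfl
    simp only [hX, hY]
    field_simp
    ring
  have hYeq : ∀ t ≥ (0 : ℝ), y t = Y t := by
    have hv := vanish_of_deriv (-κ₁) (fun s => y s - Y s)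
      (by norm_num [hy0, hY])
      (by
        intro s hs
        have := (hy s hs).sub (hYd s)
        convert this using 1
        · rfl
        · rfl
        · rfl
        ring)
    intro t ht
    exact sub_eq_zero.mp (hv t ht)
  have hXeq : ∀ t ≥ (0 : ℝ), x t = X t := by
    have hv := vanish_of_deriv (-2 * κ₁) (fun s => x s - X s)
      (by norm_num [hx0, hX])
      (by
        intro s hs
        have hx' := (hx s hs).sub (hXd s)
        convert hx' using 1
        · rfl
        · rfl
        · rfl
        rw [hYeq s hs]
        ring)
    intro t ht
    exact sub_eq_zero.mp (hv t ht)
  intro t ht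
  refine ⟨hYeq t ht, hXeq t ht, ?_⟩
  rw [hYeq t ht, hXeq t ht]
  simp only [hX, hY]
  ring
end

section
/- Let κ₁ > 0, κ₂ > 0 and γ, ρ, φ, θ ∈ ℝ. Suppose z : ℝ → ℝ is differentiable with z(0) = 0 and z′(t) = −(κ₁ + κ₂)·z(t) + (γρφθ/κ₁²)·(κ₁t − 1 + e^{−κ₁t}) + (γρφθ/κ₂²)·(κ₂t − 1 + e^{−κ₂t}) for all t ≥ 0. Then for all t ≥ 0, z(t) = γθρφ·[−κ₁² − κ₂² − κ₁κ₂ + (κ₁²κ₂ + κ₁κ₂²)·t + (κ₂² + κ₁κ₂)·e^{−κ₁t} + (κ₁² + κ₁κ₂)·e^{−κ₂t} − κ₁κ₂·e^{−(κ₁+κ₂)t}] / (κ₁²κ₂²(κ₁ + κ₂)). -/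
private lemma exp_deriv_aux (c t : ℝ) :
    HasDerivAt (fun t : ℝ => Real.exp (c * t)) (c * Real.exp (c * t)) t := by
  have h := ((hasDerivAt_id t).const_mul c).exp
  simpa [mul_comm] using h

/-- Lemma in the proof of the third-moment-variation formula (Proposition 3):
closed form of the solution of the ODE satisfied by
`z(t) = E[∫₀ᵗ n_s ds · ∫₀ᵗ V_s ds]` in the diffusion analogy. -/
theorem diffusion_z_formula
    (κ₁ κ₂ γ ρ φ θ : ℝ) (hκ₁ : 0 < κ₁) (hκ₂ : 0 < κ₂)
    (z : ℝ → ℝ) (hz0 : z 0 = 0)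
    (hz : ∀ t ≥ (0 : ℝ), HasDerivAt z
      (-(κ₁ + κ₂) * z t
        + γ * ρ * φ * θ / κ₁ ^ 2 * (κ₁ * t - 1 + Real.exp (-κ₁ * t))
        + γ * ρ * φ * θ / κ₂ ^ 2 * (κ₂ * t - 1 + Real.exp (-κ₂ * t))) t) :
    ∀ t ≥ (0 : ℝ),
      z t = γ * θ * ρ * φ *
          (-κ₁ ^ 2 - κ₂ ^ 2 - κ₁ * κ₂
            + (κ₁ ^ 2 * κ₂ + κ₁ * κ₂ ^ 2) * t
            + (κ₂ ^ 2 + κ₁ * κ₂) * Real.exp (-κ₁ * t)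
            + (κ₁ ^ 2 + κ₁ * κ₂) * Real.exp (-κ₂ * t)
            - κ₁ * κ₂ * Real.exp (-(κ₁ + κ₂) * t))
          / (κ₁ ^ 2 * κ₂ ^ 2 * (κ₁ + κ₂)) := by
  have h1 : κ₁ ≠ 0 := ne_of_gt hκ₁
  have h2 : κ₂ ≠ 0 := ne_of_gt hκ₂
  have h12 : κ₁ + κ₂ ≠ 0 := ne_of_gt (by linarith)
  set w : ℝ → ℝ := fun t => γ * θ * ρ * φ *
          (-κ₁ ^ 2 - κ₂ ^ 2 - κ₁ * κ₂
            + (κ₁ ^ 2 * κ₂ + κ₁ * κ₂ ^ 2) * t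
            + (κ₂ ^ 2 + κ₁ * κ₂) * Real.exp (-κ₁ * t)
            + (κ₁ ^ 2 + κ₁ * κ₂) * Real.exp (-κ₂ * t)
            - κ₁ * κ₂ * Real.exp (-(κ₁ + κ₂) * t))
          / (κ₁ ^ 2 * κ₂ ^ 2 * (κ₁ + κ₂)) with hw_def
  have hw0 : w 0 = 0 := by
    simp only [hw_def, mul_zero, Real.exp_zero]
    field_simp
    ring
  have hw : ∀ t : ℝ, HasDerivAt w
      (-(κ₁ + κ₂) * w t
        + γ * ρ * φ * θ / κ₁ ^ 2 * (κ₁ * t - 1 + Real.exp (-κ₁ * t))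
        + γ * ρ * φ * θ / κ₂ ^ 2 * (κ₂ * t - 1 + Real.exp (-κ₂ * t))) t := by
    intro t
    have hraw : HasDerivAt w
        (γ * θ * ρ * φ *
          ((κ₁ ^ 2 * κ₂ + κ₁ * κ₂ ^ 2)
            + (κ₂ ^ 2 + κ₁ * κ₂) * (-κ₁ * Real.exp (-κ₁ * t))
            + (κ₁ ^ 2 + κ₁ * κ₂) * (-κ₂ * Real.exp (-κ₂ * t))
            - κ₁ * κ₂ * (-(κ₁ + κ₂) * Real.exp (-(κ₁ + κ₂) * t)))
          / (κ₁ ^ 2 * κ₂ ^ 2 * (κ₁ + κ₂))) t := by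
      apply HasDerivAt.div_const
      apply HasDerivAt.const_mul
      have e1 := exp_deriv_aux (-κ₁) t
      have e2 := exp_deriv_aux (-κ₂) t
      have e3 := exp_deriv_aux (-(κ₁ + κ₂)) t
      have hid : HasDerivAt (fun t : ℝ => (κ₁ ^ 2 * κ₂ + κ₁ * κ₂ ^ 2) * t)
          (κ₁ ^ 2 * κ₂ + κ₁ * κ₂ ^ 2) t := by
        simpa using (hasDerivAt_id t).const_mul (κ₁ ^ 2 * κ₂ + κ₁ * κ₂ ^ 2)
      have := (((((hasDerivAt_const t
          (-κ₁ ^ 2 - κ₂ ^ 2 - κ₁ * κ₂)).add hid).add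
          (e1.const_mul (κ₂ ^ 2 + κ₁ * κ₂))).add
          (e2.const_mul (κ₁ ^ 2 + κ₁ * κ₂))).sub
          (e3.const_mul (κ₁ * κ₂)))
      exact this.congr_deriv (by ring)
    convert hraw using 1
    simp only [hw_def]
    rw [show -(κ₁ + κ₂) * t = -κ₁ * t + -κ₂ * t by ring, Real.exp_add]
    field_simp
    ring
  intro t ht
  -- consider g s = exp((κ₁+κ₂) s) * (z s - w s); it has zero derivative on [0, t]
  set g : ℝ → ℝ := fun s => Real.exp ((κ₁ + κ₂) * s) * (z s - w s) with hg_def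
  have hgderiv : ∀ s ≥ (0 : ℝ), HasDerivAt g 0 s := by
    intro s hs
    have hd : HasDerivAt (fun u => z u - w u) (-(κ₁ + κ₂) * (z s - w s)) s := by
      have := (hz s hs).sub (hw s)
      exact this.congr_deriv (by ring)
    have hE := exp_deriv_aux (κ₁ + κ₂) s
    have := hE.mul hd
    exact this.congr_deriv (by ring)
  have hzero : ∀ s ∈ Set.Icc (0 : ℝ) t, g s = g 0 := by
    apply constant_of_has_deriv_right_zero
    · intro s hs
      exact (hgderiv s hs.1).continuousAt.continuousWithinAt
    · intro s hs
      exact (hgderiv s hs.1).hasDerivWithinAt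
  have hgt : g t = 0 := by
    have := hzero t ⟨ht, le_refl t⟩
    simp [hg_def, hz0, hw0] at this ⊢
    tauto
  have hE : Real.exp ((κ₁ + κ₂) * t) ≠ 0 := Real.exp_ne_zero _
  have : z t - w t = 0 := by
    rcases mul_eq_zero.1 hgt with h | h
    · exact absurd h hE
    · exact h
  have : z t = w t := by linarith
  rw [this]
end
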